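/- Let d ≥ 1, let b_1, …, b_d be real numbers, and let T : 𝕋^d → 𝕋^d be the affine skew product T(x_1, x_2, …, x_d) = (x_1 + b_d, x_2 + x_1 + b_{d−1}, …, x_d + x_{d−1} + b_1) (mod 1 in each coordinate). If (c_n) is an oscillating sequence of order d, then for every continuous function F : 𝕋^d → ℂ and every x ∈ 𝕋^d, (1/N) ∑_{n=1}^{N} c_n F(T^n x) → 0 as N → ∞. -/

import Mathlib

open Filter Finset

/-- `c` is an oscillating sequence of order `k`. -/
def OscillatingOfOrder (c : ℕ → ℂ) (k : ℕ) : Prop :=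
  (∃ l : ℝ, 1 ≤ l ∧
      (fun N : ℕ => ∑ n ∈ Finset.Icc 1 N, ‖c n‖ ^ l)
        =O[atTop] (fun N : ℕ => (N : ℝ))) ∧
  ∀ P : Polynomial ℝ, P.natDegree ≤ k →
    Tendsto (fun N : ℕ => (N : ℂ)⁻¹ *
        ∑ n ∈ Finset.Icc 1 N, c n * Complex.exp (2 * Real.pi * Complex.I * (P.eval (n : ℝ))))
      atTop (nhds 0)

/-- The `d`-dimensional torus `𝕋^d = (ℝ/ℤ)^d`. -/
abbrev Torus (d : ℕ) := Fin d → AddCircle (1 : ℝ)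

/-- The affine skew product on `𝕋^d`:
`T(x_1,…,x_d) = (x_1 + b_d, x_2 + x_1 + b_{d-1}, …, x_d + x_{d-1} + b_1)`.
Here `b i` (for `i : Fin d`, `0`-indexed) represents `b_{i+1}`, so coordinate `i`
(representing `x_{i+1}`) receives `b (Fin.rev i) = b_{d-i}` (in the `1`-indexed notation). -/
noncomputable def skewProduct (d : ℕ) (b : Fin d → ℝ) (x : Torus d) : Torus d := fun i =>
  (if h : (i : ℕ) = 0 then x i
    else x i + x ⟨(i : ℕ) - 1, Nat.lt_of_le_of_lt (Nat.sub_le _ _) i.isLt⟩)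
    + ((b (Fin.rev i) : ℝ) : AddCircle (1 : ℝ))

/-! ### Auxiliary material -/

theorem OSC.fact_zero_lt_one : Fact ((0:ℝ) < 1) := ⟨one_pos⟩

attribute [local instance] OSC.fact_zero_lt_one

section Aux
open Polynomial AddCircle

lemma OSC.sum_choose_real (m : ℕ) (n : ℕ) :
    ∑ k ∈ Finset.range n, (k.choose m : ℝ) = (n.choose (m+1) : ℝ) := by
  induction n with
  | zero => simp
  | succ n ih =>
    rw [Finset.sum_range_succ, ih, Nat.choose_succ_succ]
    push_cast; ring

/-- binomial coefficient polynomial -/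
noncomputable def OSC.chPoly (m : ℕ) : Polynomial ℝ :=
  Polynomial.C ((m.factorial : ℝ)⁻¹) * descPochhammer ℝ m

lemma OSC.chPoly_natDegree (m : ℕ) : (OSC.chPoly m).natDegree ≤ m := by
  refine (Polynomial.natDegree_mul_le).trans ?_
  simp [descPochhammer_natDegree, OSC.chPoly]

lemma OSC.chPoly_eval (m n : ℕ) : (OSC.chPoly m).eval (n : ℝ) = (n.choose m : ℝ) := by
  rw [OSC.chPoly, Polynomial.eval_mul, Polynomial.eval_C,
    descPochhammer_eval_eq_descFactorial ℝ n m,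
    Nat.descFactorial_eq_factorial_mul_choose]
  push_cast
  rw [← mul_assoc, inv_mul_cancel₀ (by exact_mod_cast (Nat.factorial_pos m).ne'), one_mul]

/-- Partial sums of a polynomial sequence form a polynomial sequence of degree one more. -/
lemma OSC.sum_poly_eval (m : ℕ) : ∀ P : Polynomial ℝ, P.natDegree ≤ m →
    ∃ Q : Polynomial ℝ, Q.natDegree ≤ m + 1 ∧
      ∀ n : ℕ, ∑ k ∈ Finset.range n, P.eval (k : ℝ) = Q.eval (n : ℝ) := by
  induction m with
  | zero =>
    intro P hP
    obtain ⟨a, rfl⟩ : ∃ a, P = Polynomial.C a :=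
      ⟨P.coeff 0, Polynomial.eq_C_of_natDegree_le_zero hP⟩
    refine ⟨Polynomial.C a * Polynomial.X, ?_, fun n => ?_⟩
    · exact (Polynomial.natDegree_C_mul_le _ _).trans (le_of_eq Polynomial.natDegree_X)
    · simp only [Polynomial.eval_C, Polynomial.eval_mul, Polynomial.eval_X,
        Finset.sum_const, Finset.card_range, nsmul_eq_mul]
      ring
  | succ m ih =>
    intro P hP
    set a := P.coeff (m+1) with ha
    set R := P - Polynomial.C a * descPochhammer ℝ (m+1) with hR
    have hRdeg : R.natDegree ≤ m := by
      have h1 : R.natDegree ≤ m + 1 := by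
        refine Polynomial.natDegree_sub_le_iff_left (by
          exact (Polynomial.natDegree_C_mul_le _ _).trans
            (by simp [descPochhammer_natDegree])) |>.mpr hP
      have h2 : R.coeff (m+1) = 0 := by
        rw [hR, Polynomial.coeff_sub, Polynomial.coeff_C_mul]
        have : (descPochhammer ℝ (m+1)).coeff (m+1) = 1 := by
          have := monic_descPochhammer ℝ (m+1)
          rw [Polynomial.Monic, Polynomial.leadingCoeff, descPochhammer_natDegree] at this
          exact this
        rw [this, mul_one, sub_self]
      by_contra h
      push_neg at h
      have hdeg : R.natDegree = m + 1 := le_antisymm h1 h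
      have hRne : R ≠ 0 := fun hz => by simp [hz] at hdeg
      have := Polynomial.coeff_ne_zero_of_eq_degree (p := R) (n := m+1)
        (by rw [Polynomial.degree_eq_natDegree hRne, hdeg])
      exact this h2
    obtain ⟨Q₁, hQ₁deg, hQ₁⟩ := ih R hRdeg
    refine ⟨Q₁ + Polynomial.C (a * (m+1).factorial) * OSC.chPoly (m+2), ?_, fun n => ?_⟩
    · refine (Polynomial.natDegree_add_le _ _).trans ?_
      refine max_le (hQ₁deg.trans (by omega)) ?_
      exact (Polynomial.natDegree_C_mul_le _ _).trans (OSC.chPoly_natDegree (m+2))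
    · have hPk : ∀ k : ℕ,
          P.eval (k : ℝ) = R.eval (k : ℝ) + a * (m+1).factorial * (k.choose (m+1) : ℝ) := by
        intro k
        rw [hR, Polynomial.eval_sub, Polynomial.eval_mul, Polynomial.eval_C,
          descPochhammer_eval_eq_descFactorial ℝ k (m+1),
          Nat.descFactorial_eq_factorial_mul_choose]
        push_cast; ring
      simp only [hPk, Finset.sum_add_distrib, hQ₁ n, ← Finset.mul_sum, OSC.sum_choose_real,
        Polynomial.eval_add, Polynomial.eval_mul, Polynomial.eval_C, OSC.chPoly_eval]

/-- Real-coefficients lift of the skew product. -/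
noncomputable def OSC.skewReal (d : ℕ) (b : Fin d → ℝ) (y : Fin d → ℝ) : Fin d → ℝ := fun i =>
  (if (i : ℕ) = 0 then y i
    else y i + y ⟨(i : ℕ) - 1, Nat.lt_of_le_of_lt (Nat.sub_le _ _) i.isLt⟩) + b (Fin.rev i)

lemma OSC.skewProduct_lift (d : ℕ) (b : Fin d → ℝ) (y : Fin d → ℝ) :
    skewProduct d b (fun i => ((y i : ℝ) : AddCircle (1:ℝ))) =
      fun i => ((OSC.skewReal d b y i : ℝ) : AddCircle (1:ℝ)) := by
  funext i
  simp only [skewProduct, OSC.skewReal]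
  split_ifs with h <;> rfl

lemma OSC.skewProduct_iterate_lift (d : ℕ) (b : Fin d → ℝ) (y : Fin d → ℝ) (n : ℕ) :
    (skewProduct d b)^[n] (fun i => ((y i : ℝ) : AddCircle (1:ℝ))) =
      fun i => (((OSC.skewReal d b)^[n] y i : ℝ) : AddCircle (1:ℝ)) := by
  induction n with
  | zero => rfl
  | succ n ih =>
    rw [Function.iterate_succ_apply', ih, OSC.skewProduct_lift]
    simp only [Function.iterate_succ_apply']

lemma OSC.skewReal_closed (d : ℕ) (b : Fin d → ℝ) (y : Fin d → ℝ) (i : Fin d) (n : ℕ) :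
    (OSC.skewReal d b)^[n] y i = y i +
      ∑ k ∈ Finset.range n,
        ((if (i : ℕ) = 0 then 0
          else (OSC.skewReal d b)^[k] y
            ⟨(i : ℕ) - 1, Nat.lt_of_le_of_lt (Nat.sub_le _ _) i.isLt⟩)
          + b (Fin.rev i)) := by
  induction n with
  | zero => simp
  | succ n ih =>
    rw [Function.iterate_succ_apply', Finset.sum_range_succ, ← add_assoc, ← ih]
    simp only [OSC.skewReal]
    split_ifs with h <;> ring

lemma OSC.orbit_poly (d : ℕ) (b : Fin d → ℝ) (y : Fin d → ℝ) :
    ∀ (j : ℕ) (i : Fin d), (i : ℕ) = j →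
      ∃ P : Polynomial ℝ, P.natDegree ≤ (i : ℕ) + 1 ∧
        ∀ n : ℕ, (OSC.skewReal d b)^[n] y i = P.eval (n : ℝ) := by
  intro j
  induction j using Nat.strong_induction_on with
  | _ j IH =>
    intro i hij
    by_cases h0 : (i : ℕ) = 0
    · refine ⟨Polynomial.C (y i) + Polynomial.C (b (Fin.rev i)) * Polynomial.X, ?_, fun n => ?_⟩
      · refine (Polynomial.natDegree_add_le _ _).trans (max_le (by simp) ?_)
        exact (Polynomial.natDegree_C_mul_le _ _).trans (by simp)
      · rw [OSC.skewReal_closed]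
        simp [h0, Finset.sum_const]
        ring
    · set i' : Fin d := ⟨(i : ℕ) - 1, Nat.lt_of_le_of_lt (Nat.sub_le _ _) i.isLt⟩ with hi'
      have hval : (i' : ℕ) = (i : ℕ) - 1 := rfl
      have hlt : (i' : ℕ) < j := by omega
      obtain ⟨P', hP'deg, hP'⟩ := IH (i' : ℕ) hlt i' rfl
      have hP'deg' : P'.natDegree ≤ (i : ℕ) := hP'deg.trans (by rw [hval]; omega)
      obtain ⟨Q, hQdeg, hQ⟩ := OSC.sum_poly_eval (i : ℕ) P' hP'deg'
      refine ⟨Polynomial.C (y i) + Q + Polynomial.C (b (Fin.rev i)) * Polynomial.X,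
        ?_, fun n => ?_⟩
      · refine (Polynomial.natDegree_add_le _ _).trans (max_le ?_ ?_)
        · refine (Polynomial.natDegree_add_le _ _).trans (max_le (by simp) hQdeg)
        · exact (Polynomial.natDegree_C_mul_le _ _).trans (by simp)
      · rw [OSC.skewReal_closed]
        simp only [h0, if_neg, not_false_iff, Finset.sum_add_distrib, Finset.sum_const,
          Finset.card_range, nsmul_eq_mul]
        have : ∑ k ∈ Finset.range n, (OSC.skewReal d b)^[k] y i' = Q.eval (n : ℝ) := by
          rw [← hQ n]; exact Finset.sum_congr rfl fun k _ => hP' k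
        rw [this]
        simp only [Polynomial.eval_add, Polynomial.eval_C, Polynomial.eval_mul, Polynomial.eval_X]
        ring

noncomputable def OSC.char (d : ℕ) (m : Fin d → ℤ) : C(Torus d, ℂ) :=
  ⟨fun z => ∏ i, fourier (m i) (z i),
    continuous_finset_prod _ fun i _ =>
      (map_continuous (fourier (m i))).comp (continuous_apply i)⟩

lemma OSC.char_apply (d : ℕ) (m : Fin d → ℤ) (z : Torus d) :
    OSC.char d m z = ∏ i, fourier (m i) (z i) := rfl

lemma OSC.char_zero (d : ℕ) : OSC.char d 0 = 1 := by
  ext z; simp [OSC.char_apply]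

lemma OSC.char_mul (d : ℕ) (m m' : Fin d → ℤ) :
    OSC.char d m * OSC.char d m' = OSC.char d (m + m') := by
  ext z
  simp only [ContinuousMap.mul_apply, OSC.char_apply, ← Finset.prod_mul_distrib, Pi.add_apply,
    fourier_add]

lemma OSC.char_star (d : ℕ) (m : Fin d → ℤ) : star (OSC.char d m) = OSC.char d (-m) := by
  ext z
  rw [ContinuousMap.star_apply, OSC.char_apply, OSC.char_apply, star_prod]
  refine Finset.prod_congr rfl fun i _ => ?_
  rw [Pi.neg_apply, fourier_neg]
  rfl

noncomputable def OSC.charSpan (d : ℕ) : Submodule ℂ C(Torus d, ℂ) :=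
  Submodule.span ℂ (Set.range (OSC.char d))

lemma OSC.charSpan_mul_mem (d : ℕ) {f g : C(Torus d, ℂ)}
    (hf : f ∈ OSC.charSpan d) (hg : g ∈ OSC.charSpan d) : f * g ∈ OSC.charSpan d := by
  induction hf using Submodule.span_induction with
  | mem f hf =>
    obtain ⟨m, rfl⟩ := hf
    induction hg using Submodule.span_induction with
    | mem g hg =>
      obtain ⟨m', rfl⟩ := hg
      rw [OSC.char_mul]
      exact Submodule.subset_span ⟨m + m', rfl⟩
    | zero => rw [mul_zero]; exact zero_mem _
    | add u v _ _ hu hv => rw [mul_add]; exact add_mem hu hv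
    | smul a u _ hu => rw [mul_smul_comm]; exact Submodule.smul_mem _ a hu
  | zero => rw [zero_mul]; exact zero_mem _
  | add u v _ _ hu hv => rw [add_mul]; exact add_mem hu hv
  | smul a u _ hu => rw [smul_mul_assoc]; exact Submodule.smul_mem _ a hu

noncomputable def OSC.charAlg (d : ℕ) : StarSubalgebra ℂ C(Torus d, ℂ) where
  toSubalgebra := (OSC.charSpan d).toSubalgebra
    (by rw [← OSC.char_zero d]; exact Submodule.subset_span ⟨0, rfl⟩)
    (fun f g hf hg => OSC.charSpan_mul_mem d hf hg)
  star_mem' := by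
    intro f hf
    show star f ∈ OSC.charSpan d
    have hf' : f ∈ OSC.charSpan d := hf
    clear hf
    induction hf' using Submodule.span_induction with
    | mem f hf =>
      obtain ⟨m, rfl⟩ := hf; rw [OSC.char_star]; exact Submodule.subset_span ⟨-m, rfl⟩
    | zero => rw [star_zero]; exact zero_mem _
    | add u v _ _ hu hv => rw [star_add]; exact add_mem hu hv
    | smul a u _ hu => rw [star_smul]; exact Submodule.smul_mem _ _ hu

lemma OSC.charAlg_separates (d : ℕ) : (OSC.charAlg d).SeparatesPoints := by
  intro z w hzw
  obtain ⟨i, hi⟩ := Function.ne_iff.mp hzw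
  refine ⟨_, ⟨OSC.char d (Pi.single i 1), Submodule.subset_span ⟨_, rfl⟩, rfl⟩, ?_⟩
  simp only [OSC.char_apply]
  rw [Fintype.prod_eq_single i (fun j hj => by simp [Pi.single_eq_of_ne hj, fourier_zero]),
    Fintype.prod_eq_single i (fun j hj => by simp [Pi.single_eq_of_ne hj, fourier_zero])]
  simp only [Pi.single_eq_same, fourier_one]
  intro h
  exact hi (injective_toCircle one_ne_zero (Subtype.coe_injective h))

lemma OSC.charSpan_dense (d : ℕ) (f : C(Torus d, ℂ)) (ε : ℝ) (hε : 0 < ε) :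
    ∃ g ∈ OSC.charSpan d, ∀ z, ‖f z - g z‖ ≤ ε := by
  have htop := ContinuousMap.starSubalgebra_topologicalClosure_eq_top_of_separatesPoints
    (OSC.charAlg d) (OSC.charAlg_separates d)
  have hf : f ∈ (OSC.charAlg d).topologicalClosure := by rw [htop]; trivial
  have hf' : f ∈ closure (OSC.charAlg d : Set C(Torus d, ℂ)) := hf
  obtain ⟨g, hg, hdist⟩ := Metric.mem_closure_iff.mp hf' ε hε
  refine ⟨g, hg, fun z => ?_⟩
  calc ‖f z - g z‖ = ‖(f - g) z‖ := by rw [ContinuousMap.sub_apply]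
    _ ≤ ‖f - g‖ := ContinuousMap.norm_coe_le_norm _ z
    _ ≤ ε := by rw [← dist_eq_norm]; exact hdist.le

end Aux

/-- An oscillating sequence of order `d` is orthogonal to every affine skew product
`T(x_1,…,x_d) = (x_1 + b_d, x_2 + x_1 + b_{d-1}, …, x_d + x_{d-1} + b_1)` on `𝕋^d`. -/
theorem oscillating_orthogonal_to_skew_product
    (d : ℕ) (hd : 1 ≤ d) (b : Fin d → ℝ) (c : ℕ → ℂ) (hc : OscillatingOfOrder c d)
    (F : Torus d → ℂ) (hF : Continuous F) (x : Torus d) :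
    Tendsto (fun N : ℕ => (N : ℂ)⁻¹ *
        ∑ n ∈ Finset.Icc 1 N, c n * F ((skewProduct d b)^[n] x))
      atTop (nhds 0) := by
  obtain ⟨hc1, hc2⟩ := hc
  -- lift x to real coordinates
  have hsurj : ∀ i : Fin d, ∃ r : ℝ, ((r : ℝ) : AddCircle (1:ℝ)) = x i := fun i =>
    QuotientAddGroup.mk_surjective (x i)
  choose y hy using hsurj
  have hx : x = fun i => ((y i : ℝ) : AddCircle (1:ℝ)) := by
    funext i; exact (hy i).symm
  -- polynomial orbits
  have hpoly : ∀ i : Fin d, ∃ P : Polynomial ℝ, P.natDegree ≤ (i : ℕ) + 1 ∧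
      ∀ n : ℕ, (OSC.skewReal d b)^[n] y i = P.eval (n : ℝ) := fun i =>
    OSC.orbit_poly d b y (i : ℕ) i rfl
  choose P hPdeg hP using hpoly
  have horb : ∀ n : ℕ, (skewProduct d b)^[n] x =
      fun i => (((P i).eval (n : ℝ) : ℝ) : AddCircle (1:ℝ)) := by
    intro n
    rw [hx, OSC.skewProduct_iterate_lift]
    funext i
    rw [hP i n]
  -- limit for characters
  have hchar : ∀ m : Fin d → ℤ,
      Tendsto (fun N : ℕ => (N : ℂ)⁻¹ *
          ∑ n ∈ Finset.Icc 1 N, c n * OSC.char d m ((skewProduct d b)^[n] x))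
        atTop (nhds 0) := by
    intro m
    set Q : Polynomial ℝ := ∑ i, Polynomial.C ((m i : ℤ) : ℝ) * P i with hQ
    have hQdeg : Q.natDegree ≤ d := by
      refine (Polynomial.natDegree_sum_le _ _).trans ?_
      rw [Finset.fold_max_le]
      refine ⟨Nat.zero_le d, fun i _ => ?_⟩
      exact (Polynomial.natDegree_C_mul_le _ _).trans ((hPdeg i).trans i.isLt)
    have hval : ∀ n : ℕ, OSC.char d m ((skewProduct d b)^[n] x) =
        Complex.exp (2 * Real.pi * Complex.I * (Q.eval (n : ℝ))) := by
      intro n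
      rw [horb n, OSC.char_apply]
      have : ∀ i : Fin d, (fourier (m i) (((P i).eval (n : ℝ) : ℝ) : AddCircle (1:ℝ)) : ℂ) =
          Complex.exp (2 * Real.pi * Complex.I * ((m i : ℤ) : ℝ) * ((P i).eval (n : ℝ))) := by
        intro i
        rw [fourier_coe_apply]
        push_cast
        rw [div_one]
      rw [Finset.prod_congr rfl (fun i _ => this i), ← Complex.exp_sum]
      congr 1
      rw [hQ, Polynomial.eval_finset_sum]
      push_cast
      rw [Finset.mul_sum]
      refine Finset.sum_congr rfl fun i _ => ?_
      rw [Polynomial.eval_mul, Polynomial.eval_C]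
      push_cast
      ring
    have := hc2 Q hQdeg
    refine this.congr fun N => ?_
    congr 1
    exact Finset.sum_congr rfl fun n _ => by rw [hval n]
  -- limit for everything in the span
  have hspan : ∀ g ∈ OSC.charSpan d,
      Tendsto (fun N : ℕ => (N : ℂ)⁻¹ *
          ∑ n ∈ Finset.Icc 1 N, c n * g ((skewProduct d b)^[n] x))
        atTop (nhds 0) := by
    intro g hg
    induction hg using Submodule.span_induction with
    | mem f hf => obtain ⟨m, rfl⟩ := hf; exact hchar m
    | zero => simpa using (tendsto_const_nhds : Tendsto (fun _ : ℕ => (0:ℂ)) atTop (nhds 0))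
    | add u v _ _ hu hv =>
      have := hu.add hv
      rw [add_zero] at this
      refine this.congr fun N => ?_
      simp only [ContinuousMap.add_apply, mul_add, Finset.sum_add_distrib]
    | smul a u _ hu =>
      have := hu.const_mul a
      rw [mul_zero] at this
      refine this.congr fun N => ?_
      simp only [ContinuousMap.smul_apply, smul_eq_mul]
      rw [show (∑ n ∈ Finset.Icc 1 N, c n * (a * u ((skewProduct d b)^[n] x))) =
        a * ∑ n ∈ Finset.Icc 1 N, c n * u ((skewProduct d b)^[n] x) by
          rw [Finset.mul_sum]; exact Finset.sum_congr rfl fun n _ => by ring]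
      ring
  -- uniform bound on averages of |c|
  obtain ⟨l, hl, hO⟩ := hc1
  have hlpos : (0:ℝ) < l := lt_of_lt_of_le one_pos hl
  obtain ⟨C₀, hC₀pos, hC₀⟩ := hO.exists_pos
  rw [Asymptotics.isBigOWith_iff] at hC₀
  set C : ℝ := C₀ ^ (1/l) with hCdef
  have hCnonneg : 0 ≤ C := Real.rpow_nonneg hC₀pos.le _
  have hbd : ∀ᶠ N : ℕ in atTop,
      (N : ℝ)⁻¹ * ∑ n ∈ Finset.Icc 1 N, ‖c n‖ ≤ C := by
    filter_upwards [hC₀, eventually_ge_atTop 1] with N hN hN1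
    have hNpos : (0:ℝ) < N := by exact_mod_cast hN1
    have hsum : ∑ n ∈ Finset.Icc 1 N, ‖c n‖ ^ l ≤ C₀ * N := by
      have h1 : ‖∑ n ∈ Finset.Icc 1 N, ‖c n‖ ^ l‖ ≤ C₀ * ‖(N:ℝ)‖ := hN
      have h2 : (0:ℝ) ≤ ∑ n ∈ Finset.Icc 1 N, ‖c n‖ ^ l :=
        Finset.sum_nonneg fun n _ => Real.rpow_nonneg (norm_nonneg _) _
      rw [Real.norm_of_nonneg h2, Real.norm_of_nonneg hNpos.le] at h1
      exact h1
    set M : ℝ := (N : ℝ)⁻¹ * ∑ n ∈ Finset.Icc 1 N, ‖c n‖ with hM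
    have hMnonneg : 0 ≤ M :=
      mul_nonneg (inv_nonneg.mpr hNpos.le)
        (Finset.sum_nonneg fun n _ => norm_nonneg _)
    have key : M ^ l ≤ C₀ := by
      have := Real.rpow_arith_mean_le_arith_mean_rpow (Finset.Icc 1 N)
        (fun _ => (N:ℝ)⁻¹) (fun n => ‖c n‖)
        (fun _ _ => inv_nonneg.mpr hNpos.le)
        (by rw [Finset.sum_const, Nat.card_Icc]; simp; field_simp)
        (fun n _ => norm_nonneg _) hl
      rw [← Finset.mul_sum, ← Finset.mul_sum] at this
      calc M ^ l ≤ (N:ℝ)⁻¹ * ∑ n ∈ Finset.Icc 1 N, ‖c n‖ ^ l := this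
        _ ≤ (N:ℝ)⁻¹ * (C₀ * N) := by
            exact mul_le_mul_of_nonneg_left hsum (inv_nonneg.mpr hNpos.le)
        _ = C₀ := by field_simp
    calc M = (M ^ l) ^ (1/l) := by
          rw [← Real.rpow_mul hMnonneg, mul_one_div_cancel hlpos.ne', Real.rpow_one]
      _ ≤ C := Real.rpow_le_rpow (Real.rpow_nonneg hMnonneg _) key (by positivity)
  -- final assembly
  rw [NormedAddCommGroup.tendsto_nhds_zero]
  intro ε hε
  set δ : ℝ := ε / (2 * (C + 1)) with hδdef
  have hδpos : 0 < δ := by positivity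
  obtain ⟨g, hg, hgF⟩ := OSC.charSpan_dense d ⟨F, hF⟩ δ hδpos
  have hglim := hspan g hg
  rw [NormedAddCommGroup.tendsto_nhds_zero] at hglim
  filter_upwards [hglim (ε/2) (by positivity), hbd] with N hNg hNbd
  have hsplit : (N : ℂ)⁻¹ * ∑ n ∈ Finset.Icc 1 N, c n * F ((skewProduct d b)^[n] x) =
      ((N : ℂ)⁻¹ * ∑ n ∈ Finset.Icc 1 N, c n * g ((skewProduct d b)^[n] x)) +
      ((N : ℂ)⁻¹ * ∑ n ∈ Finset.Icc 1 N,
        c n * (F ((skewProduct d b)^[n] x) - g ((skewProduct d b)^[n] x))) := by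
    rw [← mul_add, ← Finset.sum_add_distrib]
    congr 1
    refine Finset.sum_congr rfl fun n _ => by ring
  rw [hsplit]
  have herr : ‖(N : ℂ)⁻¹ * ∑ n ∈ Finset.Icc 1 N,
      c n * (F ((skewProduct d b)^[n] x) - g ((skewProduct d b)^[n] x))‖ ≤ ε/2 := by
    rw [norm_mul, norm_inv, Complex.norm_natCast]
    have h1 : ‖∑ n ∈ Finset.Icc 1 N,
        c n * (F ((skewProduct d b)^[n] x) - g ((skewProduct d b)^[n] x))‖ ≤
        ∑ n ∈ Finset.Icc 1 N, ‖c n‖ * δ := by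
      refine (norm_sum_le _ _).trans (Finset.sum_le_sum fun n _ => ?_)
      rw [norm_mul]
      exact mul_le_mul_of_nonneg_left (hgF _) (norm_nonneg _)
    calc (N:ℝ)⁻¹ * ‖∑ n ∈ Finset.Icc 1 N,
          c n * (F ((skewProduct d b)^[n] x) - g ((skewProduct d b)^[n] x))‖
        ≤ (N:ℝ)⁻¹ * ∑ n ∈ Finset.Icc 1 N, ‖c n‖ * δ :=
          mul_le_mul_of_nonneg_left h1 (inv_nonneg.mpr (Nat.cast_nonneg N))
      _ = ((N:ℝ)⁻¹ * ∑ n ∈ Finset.Icc 1 N, ‖c n‖) * δ := by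
          rw [← Finset.sum_mul]; ring
      _ ≤ C * δ := mul_le_mul_of_nonneg_right hNbd hδpos.le
      _ ≤ (C + 1) * δ := by nlinarith
      _ = ε/2 := by rw [hδdef]; field_simp
  calc ‖_ + _‖ ≤ _ + _ := norm_add_le _ _
    _ < ε/2 + ε/2 := by exact add_lt_add_of_lt_of_le hNg herr
    _ = ε := by ring
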